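/- Let Φ₁ and Φ₂ be independent random measures on a measurable space X with σ-finite mean measures M₁ and M₂, each admitting a Palm kernel {P₁^x}_{x∈X} and {P₂^x}_{x∈X} respectively. Set Φ = Φ₁ + Φ₂ and M = M₁ + M₂, so that M is the mean measure of Φ and M₁, M₂ are absolutely continuous with respect to M. Then the kernel P^x := (dM₁/dM)(x) · (P₁^x ⊕ law(Φ₂)) + (dM₂/dM)(x) · (law(Φ₁) ⊕ P₂^x) is a Palm kernel for Φ, i.e., for every measurable B ⊆ X and every measurable set L of measures on X, E[Φ(B) 1(Φ ∈ L)] = ∫_B P^x(L) M(dx). (Equivalently: the Palm version of Φ₁+Φ₂ at x is distributed as Φ₁ₓ + Φ₂ with probability (dM₁/dM)(x) and as Φ₁ + Φ₂ₓ with probability (dM₂/dM)(x).) -/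

import Mathlib

open MeasureTheory

/-- The law of the sum of two independent random measures with laws `Q₁` and `Q₂`:
the pushforward of the product measure under the addition map `(μ, φ) ↦ μ + φ`. -/
noncomputable def sumLaw {X : Type*} [MeasurableSpace X]
    (Q₁ Q₂ : Measure (Measure X)) : Measure (Measure X) :=
  (Q₁.prod Q₂).map (fun p => p.1 + p.2)

open ProbabilityTheory in
/-- Joint measurability of `a ↦ K (g a) (Prod.mk a ⁻¹' t)` for a measurable family of
probability measures `K`. -/
lemma palmAux_measurable {α X : Type*} [MeasurableSpace α] [MeasurableSpace X]
    (K : X → Measure (Measure X)) (hK : Measurable K)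
    (hKprob : ∀ x, IsProbabilityMeasure (K x))
    (g : α → X) (hg : Measurable g)
    {t : Set (α × Measure X)} (ht : MeasurableSet t) :
    Measurable fun a : α => K (g a) (Prod.mk a ⁻¹' t) := by
  let κ : Kernel α (Measure X) := ⟨fun a => K (g a), hK.comp hg⟩
  haveI : IsMarkovKernel κ := ⟨fun a => hKprob (g a)⟩
  exact Kernel.measurable_kernel_prodMk_left (κ := κ) ht

/-- Let `Φ₁, Φ₂` be independent random measures with σ-finite mean
measures `M₁, M₂` and Palm kernels `K₁, K₂`.  Then the mixture kernel
`x ↦ (dM₁/dM)(x) • (K₁ x ⊕ law Φ₂) + (dM₂/dM)(x) • (law Φ₁ ⊕ K₂ x)`, with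
`M = M₁ + M₂`, is a Palm kernel for `Φ = Φ₁ + Φ₂`: the Campbell disintegration
`E[Φ(B) 1(Φ ∈ L)] = ∫_B P^x(L) M(dx)` holds for all measurable `B` and `L`. -/
theorem palm_of_superposition
    {Ω X : Type*} [MeasurableSpace Ω] [MeasurableSpace X]
    (P : Measure Ω) [IsProbabilityMeasure P]
    (Φ₁ Φ₂ : Ω → Measure X) (hΦ₁ : Measurable Φ₁) (hΦ₂ : Measurable Φ₂)
    (hIndep : ProbabilityTheory.IndepFun Φ₁ Φ₂ P)
    (M₁ M₂ : Measure X) [SigmaFinite M₁] [SigmaFinite M₂]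
    (hM₁ : ∀ B : Set X, MeasurableSet B → M₁ B = ∫⁻ ω, Φ₁ ω B ∂P)
    (hM₂ : ∀ B : Set X, MeasurableSet B → M₂ B = ∫⁻ ω, Φ₂ ω B ∂P)
    (K₁ K₂ : X → Measure (Measure X))
    (hK₁meas : Measurable K₁) (hK₂meas : Measurable K₂)
    (hK₁prob : ∀ x, IsProbabilityMeasure (K₁ x))
    (hK₂prob : ∀ x, IsProbabilityMeasure (K₂ x))
    (hK₁ : ∀ B : Set X, MeasurableSet B → ∀ L : Set (Measure X), MeasurableSet L →
      ∫⁻ ω, Φ₁ ω B * L.indicator (fun _ => (1 : ENNReal)) (Φ₁ ω) ∂P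
        = ∫⁻ x in B, K₁ x L ∂M₁)
    (hK₂ : ∀ B : Set X, MeasurableSet B → ∀ L : Set (Measure X), MeasurableSet L →
      ∫⁻ ω, Φ₂ ω B * L.indicator (fun _ => (1 : ENNReal)) (Φ₂ ω) ∂P
        = ∫⁻ x in B, K₂ x L ∂M₂) :
    ∀ B : Set X, MeasurableSet B → ∀ L : Set (Measure X), MeasurableSet L →
      ∫⁻ ω, (Φ₁ ω + Φ₂ ω) B * L.indicator (fun _ => (1 : ENNReal)) (Φ₁ ω + Φ₂ ω) ∂P
        = ∫⁻ x in B,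
            M₁.rnDeriv (M₁ + M₂) x * sumLaw (K₁ x) (P.map Φ₂) L
              + M₂.rnDeriv (M₁ + M₂) x * sumLaw (P.map Φ₁) (K₂ x) L
          ∂(M₁ + M₂) := by
  intro B hB L hL
  classical
  set Q₁ : Measure (Measure X) := P.map Φ₁ with hQ₁def
  set Q₂ : Measure (Measure X) := P.map Φ₂ with hQ₂def
  haveI hpQ₁ : IsProbabilityMeasure Q₁ := Measure.isProbabilityMeasure_map hΦ₁.aemeasurable
  haveI hpQ₂ : IsProbabilityMeasure Q₂ := Measure.isProbabilityMeasure_map hΦ₂.aemeasurable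
  set ind : Measure X → ENNReal := L.indicator (fun _ => (1 : ENNReal)) with hinddef
  have hadd : Measurable fun p : Measure X × Measure X => p.1 + p.2 :=
    measurable_fst.add measurable_snd
  have hS : MeasurableSet {p : Measure X × Measure X | p.1 + p.2 ∈ L} := hadd hL
  have hind : Measurable ind := measurable_const.indicator hL
  have hcoeB : Measurable fun μ : Measure X => μ B := Measure.measurable_coe hB
  have hpair : P.map (fun ω => (Φ₁ ω, Φ₂ ω)) = Q₁.prod Q₂ :=
    (ProbabilityTheory.indepFun_iff_map_prod_eq_prod_map_map hΦ₁.aemeasurable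
      hΦ₂.aemeasurable).mp hIndep
  have hF₁ : Measurable fun p : Measure X × Measure X => p.1 B * ind (p.1 + p.2) :=
    (hcoeB.comp measurable_fst).mul (hind.comp hadd)
  have hF₂ : Measurable fun p : Measure X × Measure X => p.2 B * ind (p.1 + p.2) :=
    (hcoeB.comp measurable_snd).mul (hind.comp hadd)
  -- Split the left-hand side using the law of the pair
  have hsplit :
      ∫⁻ ω, (Φ₁ ω + Φ₂ ω) B * ind (Φ₁ ω + Φ₂ ω) ∂P
        = (∫⁻ p, p.1 B * ind (p.1 + p.2) ∂(Q₁.prod Q₂))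
          + ∫⁻ p, p.2 B * ind (p.1 + p.2) ∂(Q₁.prod Q₂) := by
    calc ∫⁻ ω, (Φ₁ ω + Φ₂ ω) B * ind (Φ₁ ω + Φ₂ ω) ∂P
        = ∫⁻ ω, (fun p : Measure X × Measure X =>
            p.1 B * ind (p.1 + p.2) + p.2 B * ind (p.1 + p.2)) ((Φ₁ ω, Φ₂ ω)) ∂P := by
          refine lintegral_congr fun ω => ?_
          simp [Measure.add_apply, add_mul]
      _ = ∫⁻ p, (p.1 B * ind (p.1 + p.2) + p.2 B * ind (p.1 + p.2)) ∂(Q₁.prod Q₂) := by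
          rw [← hpair, lintegral_map (f := fun p : Measure X × Measure X =>
            p.1 B * ind (p.1 + p.2) + p.2 B * ind (p.1 + p.2)) (hF₁.add hF₂) (hΦ₁.prodMk hΦ₂)]
      _ = _ := lintegral_add_left hF₁ _
  -- joint measurability facts
  have hG₁ : Measurable fun p : Measure X × X => K₁ p.2 {μ : Measure X | μ + p.1 ∈ L} :=
    palmAux_measurable K₁ hK₁meas hK₁prob Prod.snd measurable_snd
      (t := {q : (Measure X × X) × Measure X | q.2 + q.1.1 ∈ L})
      ((measurable_snd.add measurable_fst.fst) hL)
  have hG₂ : Measurable fun p : Measure X × X => K₂ p.2 {φ : Measure X | p.1 + φ ∈ L} :=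
    palmAux_measurable K₂ hK₂meas hK₂prob Prod.snd measurable_snd
      (t := {q : (Measure X × X) × Measure X | q.1.1 + q.2 ∈ L})
      ((measurable_fst.fst.add measurable_snd) hL)
  have hg₁ : Measurable fun p : X × Measure X => K₁ p.1 {μ : Measure X | μ + p.2 ∈ L} :=
    palmAux_measurable K₁ hK₁meas hK₁prob Prod.fst measurable_fst
      (t := {q : (X × Measure X) × Measure X | q.2 + q.1.2 ∈ L})
      ((measurable_snd.add measurable_fst.snd) hL)
  have hg₂ : Measurable fun p : X × Measure X => K₂ p.1 {φ : Measure X | p.2 + φ ∈ L} :=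
    palmAux_measurable K₂ hK₂meas hK₂prob Prod.fst measurable_fst
      (t := {q : (X × Measure X) × Measure X | q.1.2 + q.2 ∈ L})
      ((measurable_fst.snd.add measurable_snd) hL)
  -- identify sumLaw with iterated set-measures
  have hsum₁ : ∀ x : X, sumLaw (K₁ x) Q₂ L = ∫⁻ φ, K₁ x {μ : Measure X | μ + φ ∈ L} ∂Q₂ := by
    intro x
    haveI := hK₁prob x
    rw [sumLaw, Measure.map_apply hadd hL, Measure.prod_apply_symm (hadd hL)]
    rfl
  have hsum₂ : ∀ x : X, sumLaw Q₁ (K₂ x) L = ∫⁻ μ, K₂ x {φ : Measure X | μ + φ ∈ L} ∂Q₁ := by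
    intro x
    haveI := hK₂prob x
    rw [sumLaw, Measure.map_apply hadd hL, Measure.prod_apply (hadd hL)]
    rfl
  -- measurability of the two mixture components
  have hf₁ : Measurable fun x : X => sumLaw (K₁ x) Q₂ L := by
    have : Measurable fun x : X => ∫⁻ φ, K₁ x {μ : Measure X | μ + φ ∈ L} ∂Q₂ :=
      hg₁.lintegral_prod_right'
    simpa only [hsum₁] using this
  have hf₂ : Measurable fun x : X => sumLaw Q₁ (K₂ x) L := by
    have : Measurable fun x : X => ∫⁻ μ, K₂ x {φ : Measure X | μ + φ ∈ L} ∂Q₁ :=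
      hg₂.lintegral_prod_right'
    simpa only [hsum₂] using this
  -- Term 1
  have hA : ∫⁻ p, p.1 B * ind (p.1 + p.2) ∂(Q₁.prod Q₂)
      = ∫⁻ x in B, sumLaw (K₁ x) Q₂ L ∂M₁ := by
    have step : ∀ φ : Measure X, ∫⁻ μ, μ B * ind (μ + φ) ∂Q₁
        = ∫⁻ x in B, K₁ x {μ : Measure X | μ + φ ∈ L} ∂M₁ := by
      intro φ
      have hLφ : MeasurableSet {μ : Measure X | μ + φ ∈ L} :=
        (hadd.comp (measurable_id.prodMk measurable_const)) hL
      calc ∫⁻ μ, μ B * ind (μ + φ) ∂Q₁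
          = ∫⁻ μ, μ B *
              ({ν : Measure X | ν + φ ∈ L}.indicator (fun _ => (1 : ENNReal))) μ ∂Q₁ := by
            refine lintegral_congr fun μ => ?_
            congr 1
        _ = ∫⁻ ω, Φ₁ ω B *
              ({ν : Measure X | ν + φ ∈ L}.indicator (fun _ => (1 : ENNReal))) (Φ₁ ω) ∂P := by
            rw [hQ₁def]
            exact lintegral_map (hcoeB.mul (measurable_const.indicator hLφ)) hΦ₁
        _ = ∫⁻ x in B, K₁ x {μ : Measure X | μ + φ ∈ L} ∂M₁ := hK₁ B hB _ hLφ
    calc ∫⁻ p, p.1 B * ind (p.1 + p.2) ∂(Q₁.prod Q₂)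
        = ∫⁻ φ, ∫⁻ μ, μ B * ind (μ + φ) ∂Q₁ ∂Q₂ :=
          lintegral_prod_symm _ hF₁.aemeasurable
      _ = ∫⁻ φ, ∫⁻ x in B, K₁ x {μ : Measure X | μ + φ ∈ L} ∂M₁ ∂Q₂ :=
          lintegral_congr step
      _ = ∫⁻ x in B, ∫⁻ φ, K₁ x {μ : Measure X | μ + φ ∈ L} ∂Q₂ ∂M₁ :=
          lintegral_lintegral_swap hG₁.aemeasurable
      _ = ∫⁻ x in B, sumLaw (K₁ x) Q₂ L ∂M₁ := by
          refine lintegral_congr fun x => (hsum₁ x).symm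
  -- Term 2
  have hBterm : ∫⁻ p, p.2 B * ind (p.1 + p.2) ∂(Q₁.prod Q₂)
      = ∫⁻ x in B, sumLaw Q₁ (K₂ x) L ∂M₂ := by
    have step : ∀ μ : Measure X, ∫⁻ φ, φ B * ind (μ + φ) ∂Q₂
        = ∫⁻ x in B, K₂ x {φ : Measure X | μ + φ ∈ L} ∂M₂ := by
      intro μ
      have hLμ : MeasurableSet {φ : Measure X | μ + φ ∈ L} :=
        (hadd.comp (measurable_const.prodMk measurable_id)) hL
      calc ∫⁻ φ, φ B * ind (μ + φ) ∂Q₂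
          = ∫⁻ φ, φ B *
              ({ν : Measure X | μ + ν ∈ L}.indicator (fun _ => (1 : ENNReal))) φ ∂Q₂ := by
            refine lintegral_congr fun φ => ?_
            congr 1
        _ = ∫⁻ ω, Φ₂ ω B *
              ({ν : Measure X | μ + ν ∈ L}.indicator (fun _ => (1 : ENNReal))) (Φ₂ ω) ∂P := by
            rw [hQ₂def]
            exact lintegral_map (hcoeB.mul (measurable_const.indicator hLμ)) hΦ₂
        _ = ∫⁻ x in B, K₂ x {φ : Measure X | μ + φ ∈ L} ∂M₂ := hK₂ B hB _ hLμ
    calc ∫⁻ p, p.2 B * ind (p.1 + p.2) ∂(Q₁.prod Q₂)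
        = ∫⁻ μ, ∫⁻ φ, φ B * ind (μ + φ) ∂Q₂ ∂Q₁ :=
          lintegral_prod _ hF₂.aemeasurable
      _ = ∫⁻ μ, ∫⁻ x in B, K₂ x {φ : Measure X | μ + φ ∈ L} ∂M₂ ∂Q₁ :=
          lintegral_congr step
      _ = ∫⁻ x in B, ∫⁻ μ, K₂ x {φ : Measure X | μ + φ ∈ L} ∂Q₁ ∂M₂ :=
          lintegral_lintegral_swap hG₂.aemeasurable
      _ = ∫⁻ x in B, sumLaw Q₁ (K₂ x) L ∂M₂ := by
          refine lintegral_congr fun x => (hsum₂ x).symm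
  -- Radon–Nikodym substitution
  have hac₁ : M₁ ≪ (M₁ + M₂) :=
    Measure.absolutelyContinuous_of_le (Measure.le_add_right le_rfl)
  have hac₂ : M₂ ≪ (M₁ + M₂) :=
    Measure.absolutelyContinuous_of_le (Measure.le_add_left le_rfl)
  have hrn₁ : Measurable (M₁.rnDeriv (M₁ + M₂)) := Measure.measurable_rnDeriv _ _
  have hrn₂ : Measurable (M₂.rnDeriv (M₁ + M₂)) := Measure.measurable_rnDeriv _ _
  have key₁ : ∫⁻ x in B, sumLaw (K₁ x) Q₂ L ∂M₁
      = ∫⁻ x in B, M₁.rnDeriv (M₁ + M₂) x * sumLaw (K₁ x) Q₂ L ∂(M₁ + M₂) := by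
    conv_lhs => rw [← Measure.withDensity_rnDeriv_eq M₁ (M₁ + M₂) hac₁]
    rw [setLIntegral_withDensity_eq_setLIntegral_mul _ hrn₁ hf₁ hB]
    rfl
  have key₂ : ∫⁻ x in B, sumLaw Q₁ (K₂ x) L ∂M₂
      = ∫⁻ x in B, M₂.rnDeriv (M₁ + M₂) x * sumLaw Q₁ (K₂ x) L ∂(M₁ + M₂) := by
    conv_lhs => rw [← Measure.withDensity_rnDeriv_eq M₂ (M₁ + M₂) hac₂]
    rw [setLIntegral_withDensity_eq_setLIntegral_mul _ hrn₂ hf₂ hB]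
    rfl
  rw [hsplit, hA, hBterm, key₁, key₂,
    ← lintegral_add_left
      (f := fun x => M₁.rnDeriv (M₁ + M₂) x * sumLaw (K₁ x) Q₂ L) (hrn₁.mul hf₁) _]
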